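/- Completeness criterion for s-semantics: let P be a finite definite program, S a set of atoms, and |·| : S → ℕ a level mapping (invariant under renaming). Suppose that for each A ∈ S there exist a clause C ∈ P and atoms A₁,…,Aₙ, each a variant of an atom in S, such that A ∈ T^π_{{C}}({A₁,…,Aₙ}) and |A| > |Aᵢ'| for atoms Aᵢ' ∈ S with Aᵢ a variant of Aᵢ'. Then S ⊆ O(P), i.e., S is contained in the least fixed point of T^π_P. -/
import Mathlib


/-- First-order terms over a signature with constants and a binary application,
    with variables indexed by naturals. -/
inductive Tm : Type
  | var : ℕ → Tm
  | const : ℕ → Tm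
  | app : Tm → Tm → Tm
deriving DecidableEq

/-- Applying a substitution (a map from variables to terms) to a term. -/
def Tm.subst (σ : ℕ → Tm) : Tm → Tm
  | .var x => σ x
  | .const c => .const c
  | .app s t => .app (s.subst σ) (t.subst σ)

/-- Composition of substitutions: first `θ`, then `δ`. -/
def Subst.comp (θ δ : ℕ → Tm) : ℕ → Tm := fun x => (θ x).subst δ

/-- A renaming is a substitution given by a bijection on variables. -/
def IsRenaming (γ : ℕ → Tm) : Prop :=
  ∃ f : ℕ → ℕ, Function.Bijective f ∧ γ = fun x => Tm.var (f x)

/-- `θ` unifies `s` and `t`. -/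
def IsUnifier (s t : Tm) (θ : ℕ → Tm) : Prop := s.subst θ = t.subst θ

/-- `θ` is a most general unifier of `s` and `t`: every unifier factors through it. -/
def IsMGU (s t : Tm) (θ : ℕ → Tm) : Prop :=
  IsUnifier s t θ ∧ ∀ σ, IsUnifier s t σ → ∃ δ, ∀ x, σ x = (θ x).subst δ

/-- The set of variables of a term. -/
def Tm.vars : Tm → Finset ℕ
  | .var x => {x}
  | .const _ => ∅
  | .app s t => s.vars ∪ t.vars

/-- A term is ground if it has no variables. -/
def Tm.Ground (t : Tm) : Prop := t.vars = ∅

/-- An atom `p(t₁,…,tₙ)`: a predicate symbol together with its argument list. -/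
structure Atom where
  pred : ℕ
  args : List Tm
deriving DecidableEq

/-- Applying a substitution to an atom. -/
def Atom.subst (θ : ℕ → Tm) (A : Atom) : Atom := ⟨A.pred, A.args.map (Tm.subst θ)⟩

/-- The variables of an atom. -/
def Atom.vars (A : Atom) : Finset ℕ := A.args.foldr (fun t s => t.vars ∪ s) ∅

/-- A definite clause `H ← B₁,…,Bₙ`. -/
structure Clause where
  head : Atom
  body : List Atom
deriving DecidableEq

/-- The variables of a clause. -/
def Clause.vars (C : Clause) : Finset ℕ :=
  C.head.vars ∪ C.body.foldr (fun a s => a.vars ∪ s) ∅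

/-- A (finite) definite program. -/
abbrev Program := Finset Clause

/-- `θ` unifies the tuples `(B₁,…,Bₙ)` and `(A₁,…,Aₙ)` of atoms. -/
def IsUnifierL (Bs As : List Atom) (θ : ℕ → Tm) : Prop :=
  Bs.map (Atom.subst θ) = As.map (Atom.subst θ)

/-- `θ` is an mgu of the tuples `(B₁,…,Bₙ)` and `(A₁,…,Aₙ)` of atoms. -/
def IsMGUL (Bs As : List Atom) (θ : ℕ → Tm) : Prop :=
  IsUnifierL Bs As θ ∧ ∀ σ, IsUnifierL Bs As σ → ∃ δ, ∀ x, σ x = (θ x).subst δ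

/-- The s-semantics immediate consequence operator `T^π_P`. -/
def Tpi (P : Program) (I : Set Atom) : Set Atom :=
  { A | ∃ C ∈ P, ∃ As : List Atom,
      As.length = C.body.length ∧ (∀ a ∈ As, a ∈ I) ∧
      (C.vars :: As.map Atom.vars).Pairwise Disjoint ∧
      ∃ θ, IsMGUL C.body As θ ∧ A = C.head.subst θ }

/-- `A'` is a variant of `A` (obtained from `A` by a renaming). -/
def IsVariant (A A' : Atom) : Prop := ∃ γ, IsRenaming γ ∧ A' = A.subst γ

lemma Tm.subst_subst (θ δ : ℕ → Tm) (t : Tm) :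
    (t.subst θ).subst δ = t.subst (Subst.comp θ δ) := by
  induction t <;> simp [Tm.subst, Subst.comp, *]

lemma Atom.subst_subst (θ δ : ℕ → Tm) (A : Atom) :
    Atom.subst δ (Atom.subst θ A) = Atom.subst (Subst.comp θ δ) A := by
  simp [Atom.subst, List.map_map, Function.comp_def, Tm.subst_subst]

lemma IsRenaming.inv {γ : ℕ → Tm} (h : IsRenaming γ) :
    ∃ γ', IsRenaming γ' ∧ ∀ t : Tm, (t.subst γ).subst γ' = t := by
  obtain ⟨f, hf, rfl⟩ := h
  obtain ⟨g, hgf, hfg⟩ := Function.bijective_iff_has_inverse.mp hf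
  refine ⟨fun x => .var (g x), ⟨g, Function.bijective_iff_has_inverse.mpr ⟨f, hfg, hgf⟩, rfl⟩, ?_⟩
  intro t
  induction t with
  | var x => simp [Tm.subst, hgf x]
  | const c => simp [Tm.subst]
  | app s t ihs iht => simp [Tm.subst, ihs, iht]

lemma Tpi_variant {P : Program} {I : Set Atom} {A A' : Atom}
    (hA : A ∈ Tpi P I) (hv : IsVariant A A') : A' ∈ Tpi P I := by
  obtain ⟨γ, hγ, rfl⟩ := hv
  obtain ⟨C, hC, As, hlen, hmem, hdisj, θ, hmgu, rfl⟩ := hA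
  obtain ⟨γ', hγ', hinv⟩ := hγ.inv
  refine ⟨C, hC, As, hlen, hmem, hdisj, Subst.comp θ γ, ⟨?_, ?_⟩, ?_⟩
  · have h1 := hmgu.1
    unfold IsUnifierL at h1 ⊢
    calc C.body.map (Atom.subst (Subst.comp θ γ))
        = (C.body.map (Atom.subst θ)).map (Atom.subst γ) := by
          simp [List.map_map, Function.comp_def, Atom.subst_subst]
      _ = (As.map (Atom.subst θ)).map (Atom.subst γ) := by rw [h1]
      _ = As.map (Atom.subst (Subst.comp θ γ)) := by
          simp [List.map_map, Function.comp_def, Atom.subst_subst]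
  · intro σ hσ
    obtain ⟨δ, hδ⟩ := hmgu.2 σ hσ
    refine ⟨Subst.comp γ' δ, fun x => ?_⟩
    have key : (((θ x).subst γ)).subst (Subst.comp γ' δ) = (θ x).subst δ := by
      rw [← Tm.subst_subst, hinv]
    rw [hδ x]; exact key.symm
  · rw [Atom.subst_subst]

lemma Tpi_mono {P P' : Program} {I I' : Set Atom} (hP : P ⊆ P') (hI : I ⊆ I') :
    Tpi P I ⊆ Tpi P' I' := by
  rintro A ⟨C, hC, As, hlen, hmem, hdisj, θ, hmgu, rfl⟩
  exact ⟨C, hP hC, As, hlen, fun a ha => hI (hmem a ha), hdisj, θ, hmgu, rfl⟩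

/-- completeness criterion: if every `A ∈ S` is produced by
    `T^π_{{C}}` for some clause `C ∈ P` from atoms that are variants of
    atoms of `S` of smaller level, then `S ⊆ O(P)`. -/
theorem completeness_criterion (P : Program) (S : Set Atom) (lvl : Atom → ℕ)
    (hlvl : ∀ A ∈ S, ∀ A' ∈ S, IsVariant A A' → lvl A = lvl A')
    (h : ∀ A ∈ S, ∃ C ∈ P, ∃ As : List Atom,
        (∀ Ai ∈ As, ∃ Ai' ∈ S, IsVariant Ai' Ai ∧ lvl Ai' < lvl A) ∧
        A ∈ Tpi {C} {a | a ∈ As}) :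
    S ⊆ ⋃ n : ℕ, (Tpi P)^[n] ∅ := by
  intro A hA
  suffices H : ∀ k, ∀ A ∈ S, lvl A < k → A ∈ (Tpi P)^[k] ∅ by
    exact Set.mem_iUnion.mpr ⟨lvl A + 1, H _ A hA (Nat.lt_succ_self _)⟩
  intro k
  induction k with
  | zero => intro A hA h0; omega
  | succ m IH =>
    intro A hA hlt
    obtain ⟨C, hC, As, hAs, hT⟩ := h A hA
    have hmemIter : ∀ Ai ∈ As, Ai ∈ (Tpi P)^[m] ∅ := by
      intro Ai hAi
      obtain ⟨Ai', hAi'S, hvar, hlvl'⟩ := hAs Ai hAi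
      have hAm : lvl Ai' < m := by omega
      obtain ⟨m', rfl⟩ : ∃ m', m = m' + 1 := ⟨m - 1, by omega⟩
      have hIn := IH Ai' hAi'S hAm
      rw [Function.iterate_succ_apply'] at hIn ⊢
      exact Tpi_variant hIn hvar
    rw [Function.iterate_succ_apply']
    exact Tpi_mono (Finset.singleton_subset_iff.mpr hC) (fun a ha => hmemIter a ha) hT
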